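/- For every short exact sequence of finite dimensional A-modules 0 → M → L → N → 0, one has dim_k End_A(L) ≤ dim_k End_A(M ⊕ N), and equality holds if and only if the sequence splits. -/

import Mathlib

open CategoryTheory

universe u v w

/-! ### Finite quivers -/

/-- A finite quiver on `n` vertices, given by the number of arrows between any two vertices. -/
structure QuivData (n : ℕ) where
  arrows : Fin n → Fin n → ℕ

namespace QuivData

variable {n : ℕ} (Q : QuivData n)

/-- There is an arrow from `i` to `j`. -/
def Step (i j : Fin n) : Prop := Q.arrows i j ≠ 0

/-- There is a (directed) path of length `≥ 1` from `i` to `j`. -/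
def HasPath (i j : Fin n) : Prop := Relation.TransGen Q.Step i j

/-- The quiver has no (directed) cycles. -/
def Acyclic : Prop := ∀ i, ¬ Q.HasPath i i

/-- There exists a path of length at least two between `i` and `j`
(in one direction or the other). -/
def HasLongPath (i j : Fin n) : Prop :=
  (∃ l, Q.HasPath i l ∧ Q.Step l j) ∨ (∃ l, Q.HasPath j l ∧ Q.Step l i)

/-- The underlying graph of the quiver. -/
def graph : SimpleGraph (Fin n) where
  Adj i j := i ≠ j ∧ Q.arrows i j + Q.arrows j i ≠ 0
  symm := ⟨fun i j h => ⟨Ne.symm h.1, fun c => h.2 (by omega)⟩⟩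
  loopless := ⟨fun i h => h.1 rfl⟩

/-- The symmetrized matrix `2I - (adjacency matrix)` of the underlying graph. -/
def symMat : Matrix (Fin n) (Fin n) ℚ := fun i j =>
  if i = j then 2 - 2 * (Q.arrows i i : ℚ) else -((Q.arrows i j : ℚ) + (Q.arrows j i : ℚ))

/-- `Q` is a Dynkin quiver (of type `A`, `D` or `E`): it is acyclic, its underlying graph is
connected, and the symmetrized Euler matrix is positive definite.  Among connected graphs,
positive definiteness of this matrix characterizes exactly the `ADE` Dynkin diagrams. -/
def IsDynkin : Prop := Q.Acyclic ∧ Q.graph.Connected ∧ Q.symMat.PosDef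

/-- The Tits quadratic form of the quiver. -/
def titsForm (x : Fin n → ℕ) : ℤ :=
  ∑ i, (x i : ℤ) ^ 2 - ∑ i, ∑ j, (Q.arrows i j : ℤ) * (x i : ℤ) * (x j : ℤ)

/-- The positive roots of the simple Lie algebra attached to the underlying graph of `Q`;
by Gabriel's theorem these are exactly the nonzero dimension vectors on which the
Tits form takes the value `1`. -/
def PosRoot : Type := {x : Fin n → ℕ // x ≠ 0 ∧ Q.titsForm x = 1}

/-- `i` is a sink. -/
def IsSink (i : Fin n) : Prop := ∀ j, Q.arrows i j = 0

/-- `i` is a source. -/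
def IsSource (i : Fin n) : Prop := ∀ j, Q.arrows j i = 0

/-- Every vertex is a sink or a source. -/
def Bipartite : Prop := ∀ i, Q.IsSink i ∨ Q.IsSource i

/-- Generators of the path algebra: one for each vertex, one for each arrow. -/
def Gens : Type := Fin n ⊕ Σ i j : Fin n, Fin (Q.arrows i j)

end QuivData

/-! ### Path algebras -/

variable (k : Type) [Field k]

/-- The relations presenting the path algebra `kQ` as a quotient of the free algebra on the
vertices (giving the pairwise orthogonal idempotents `e_i` with `∑ e_i = 1`) and the arrows
(with `a = e_j * a * e_i` for an arrow `a : i → j`). -/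
inductive PathRel {n : ℕ} (Q : QuivData n) :
    FreeAlgebra k Q.Gens → FreeAlgebra k Q.Gens → Prop
  | idem (i : Fin n) :
      PathRel Q (FreeAlgebra.ι k (Sum.inl i) * FreeAlgebra.ι k (Sum.inl i))
        (FreeAlgebra.ι k (Sum.inl i))
  | orth (i j : Fin n) (h : i ≠ j) :
      PathRel Q (FreeAlgebra.ι k (Sum.inl i) * FreeAlgebra.ι k (Sum.inl j)) 0
  | sum_one : PathRel Q (∑ i : Fin n, FreeAlgebra.ι k (Sum.inl i)) 1
  | arrow (i j : Fin n) (a : Fin (Q.arrows i j)) :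
      PathRel Q (FreeAlgebra.ι k (Sum.inl j) * FreeAlgebra.ι k (Sum.inr ⟨i, j, a⟩) *
        FreeAlgebra.ι k (Sum.inl i)) (FreeAlgebra.ι k (Sum.inr ⟨i, j, a⟩))

/-- The path algebra `A = kQ` of the quiver `Q` over `k`. -/
def PathAlg {n : ℕ} (Q : QuivData n) : Type := RingQuot (PathRel k Q)

noncomputable instance {n : ℕ} (Q : QuivData n) : Ring (PathAlg k Q) :=
  inferInstanceAs (Ring (RingQuot (PathRel k Q)))

noncomputable instance {n : ℕ} (Q : QuivData n) : Algebra k (PathAlg k Q) :=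
  inferInstanceAs (Algebra k (RingQuot (PathRel k Q)))

/-- The idempotent `e_i` of the path algebra attached to the vertex `i`. -/
noncomputable def eVert {n : ℕ} (Q : QuivData n) (i : Fin n) : PathAlg k Q :=
  RingQuot.mkAlgHom k (PathRel k Q) (FreeAlgebra.ι k (Sum.inl i))

theorem eVert_mul_self {n : ℕ} (Q : QuivData n) (i : Fin n) :
    eVert k Q i * eVert k Q i = eVert k Q i := by
  have h := RingQuot.mkAlgHom_rel k (PathRel.idem (k := k) (Q := Q) i)
  exact (map_mul (RingQuot.mkAlgHom k (PathRel k Q)) _ _).symm.trans h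

/-- The indecomposable projective module `P_i = (kQ)·e_i`, as a submodule of the path algebra. -/
noncomputable def projSub {n : ℕ} (Q : QuivData n) (i : Fin n) :
    Submodule (PathAlg k Q) (PathAlg k Q) :=
  Submodule.span (PathAlg k Q) {eVert k Q i}

/-- The indecomposable projective module `P_i = (kQ)·e_i`. -/
noncomputable abbrev ProjMod {n : ℕ} (Q : QuivData n) (i : Fin n) : Type :=
  ↥(projSub k Q i)

/-- Right multiplication by `e_i`, as a splitting of the inclusion `P_i ⊆ kQ`. -/
noncomputable def mulVert {n : ℕ} (Q : QuivData n) (i : Fin n) :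
    PathAlg k Q →ₗ[PathAlg k Q] ProjMod k Q i where
  toFun x := ⟨x * eVert k Q i, Submodule.mem_span_singleton.2 ⟨x, (smul_eq_mul _ _).trans rfl⟩⟩
  map_add' x y := Subtype.ext (add_mul x y _)
  map_smul' a x := Subtype.ext (by simp [smul_eq_mul, mul_assoc])

theorem mulVert_comp_subtype {n : ℕ} (Q : QuivData n) (i : Fin n) :
    (mulVert k Q i) ∘ₗ (projSub k Q i).subtype = LinearMap.id := by
  ext x
  obtain ⟨a, ha⟩ := Submodule.mem_span_singleton.1 x.2
  have : (x : PathAlg k Q) * eVert k Q i = (x : PathAlg k Q) := by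
    rw [← ha, smul_eq_mul, mul_assoc, eVert_mul_self]
  simpa [mulVert, Subtype.ext_iff] using this

theorem projMod_projective {n : ℕ} (Q : QuivData n) (i : Fin n) :
    Module.Projective (PathAlg k Q) (ProjMod k Q i) :=
  Module.Projective.of_split (projSub k Q i).subtype (mulVert k Q i) (mulVert_comp_subtype k Q i)

theorem projMod_finite {n : ℕ} (Q : QuivData n) (i : Fin n) :
    Module.Finite (PathAlg k Q) (ProjMod k Q i) :=
  Module.Finite.iff_fg.2 (Submodule.fg_span_singleton _)

/-! ### The category `C₁(𝒫)` of 1-cyclic complexes of projective modules -/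

/-- An object of `C₁(𝒫)`: a finite dimensional projective `A`-module `P` together with an
endomorphism `d` with `d² = 0`. -/
structure Cyc (A : Type v) [Ring A] : Type (v + 1) where
  carrier : Type v
  [acg : AddCommGroup carrier]
  [mod : Module A carrier]
  projective : Module.Projective A carrier
  finite : Module.Finite A carrier
  d : carrier →ₗ[A] carrier
  dsq : d ∘ₗ d = 0

attribute [instance] Cyc.acg Cyc.mod Cyc.projective Cyc.finite

namespace Cyc

variable {A : Type v} [Ring A]

instance : Category.{v} (Cyc A) where
  Hom X Y := {f : X.carrier →ₗ[A] Y.carrier // Y.d ∘ₗ f = f ∘ₗ X.d}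
  id X := ⟨LinearMap.id, by rw [LinearMap.comp_id, LinearMap.id_comp]⟩
  comp {X Y Z} f g := ⟨g.1 ∘ₗ f.1, by
    rw [← LinearMap.comp_assoc, g.2, LinearMap.comp_assoc, f.2, ← LinearMap.comp_assoc]⟩
  id_comp f := Subtype.ext (LinearMap.comp_id _)
  comp_id f := Subtype.ext (LinearMap.id_comp _)
  assoc f g h := Subtype.ext (LinearMap.comp_assoc _ _ _).symm

/-- The underlying linear map of a morphism in `C₁(𝒫)`. -/
def homMap {X Y : Cyc A} (f : X ⟶ Y) : X.carrier →ₗ[A] Y.carrier := f.1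

/-- Construct a morphism in `C₁(𝒫)`. -/
def mkHom {X Y : Cyc A} (f : X.carrier →ₗ[A] Y.carrier) (h : Y.d ∘ₗ f = f ∘ₗ X.d) :
    X ⟶ Y := ⟨f, h⟩

/-- The zero morphism. -/
def zeroHom (X Y : Cyc A) : X ⟶ Y := mkHom 0 (by simp)

/-- An object of `C₁(𝒫)` is indecomposable if it is nonzero and admits no nontrivial
idempotent endomorphism. -/
def Indec (X : Cyc A) : Prop :=
  Nontrivial X.carrier ∧ ∀ e : X ⟶ X, e ≫ e = e → e = 𝟙 X ∨ e = zeroHom X X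

/-- A composable pair of morphisms is a conflation (that is, a componentwise short exact
sequence `0 → Y → Z → X → 0` in `C₁(𝒫)`). -/
def IsConflation {X Y Z : Cyc A} (φ : Y ⟶ Z) (ψ : Z ⟶ X) : Prop :=
  Function.Injective (homMap φ) ∧ Function.Surjective (homMap ψ) ∧
    LinearMap.range (homMap φ) = LinearMap.ker (homMap ψ)

/-- The set of short exact sequences `0 → Y → Z → X → 0` in `C₁(𝒫)`. -/
def SES (X Y Z : Cyc A) : Type v := {p : (Y ⟶ Z) × (Z ⟶ X) // IsConflation p.1 p.2}

/-- The orbit relation for the free action of `Aut X × Aut Y` on the short exact sequences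
`0 → Y → Z → X → 0`, given by `(f, g) · (φ, ψ) = (φ ∘ g⁻¹, f ∘ ψ)`. -/
def sesRel (X Y Z : Cyc A) (p q : SES X Y Z) : Prop :=
  ∃ (f : X ≅ X) (g : Y ≅ Y), q.1.1 = g.inv ≫ p.1.1 ∧ q.1.2 = p.1.2 ≫ f.hom

/-- The Hall number `F^Z_{X Y}`: the number of short exact sequences `0 → Y → Z → X → 0`
in `C₁(𝒫)` modulo the (free) action of `Aut X × Aut Y`. -/
noncomputable def hallNum (X Y Z : Cyc A) : ℕ := Nat.card (Quot (sesRel X Y Z))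

/-- A deflation is a morphism appearing as the epimorphism in some conflation. -/
def IsDeflation {Z W : Cyc A} (ψ : Z ⟶ W) : Prop := ∃ (Y : Cyc A) (φ : Y ⟶ Z), IsConflation φ ψ

/-- An inflation is a morphism appearing as the monomorphism in some conflation. -/
def IsInflation {Y Z : Cyc A} (φ : Y ⟶ Z) : Prop := ∃ (W : Cyc A) (ψ : Z ⟶ W), IsConflation φ ψ

/-- A projective object of the exact category `C₁(𝒫)`. -/
def ProjObj (P : Cyc A) : Prop :=
  ∀ ⦃Z W : Cyc A⦄ (ψ : Z ⟶ W), IsDeflation ψ → ∀ g : P ⟶ W, ∃ h : P ⟶ Z, h ≫ ψ = g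

/-- An injective object of the exact category `C₁(𝒫)`. -/
def InjObj (I : Cyc A) : Prop :=
  ∀ ⦃Y Z : Cyc A⦄ (φ : Y ⟶ Z), IsInflation φ → ∀ g : Y ⟶ I, ∃ h : Z ⟶ I, φ ≫ h = g

end Cyc

/-- The isomorphism classes of objects of `C₁(𝒫)`. -/
def IsoCls (A : Type v) [Ring A] : Type (v + 1) :=
  Quotient (CategoryTheory.isIsomorphicSetoid (Cyc A))

/-- The isomorphism class of an object of `C₁(𝒫)`. -/
def Cyc.cls {A : Type v} [Ring A] (X : Cyc A) : IsoCls A :=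
  Quotient.mk (CategoryTheory.isIsomorphicSetoid (Cyc A)) X

namespace Cyc

variable {A : Type v} [Ring A]

/-- The shift: `(P, d) [1] = (P, -d)`. -/
def shift (X : Cyc A) : Cyc A where
  carrier := X.carrier
  projective := X.projective
  finite := X.finite
  d := -X.d
  dsq := by rw [LinearMap.neg_comp, LinearMap.comp_neg, neg_neg, X.dsq]

/-- The homology `H₀(P, d) = ker d / im d` of a 1-cyclic complex. -/
abbrev H0 (X : Cyc A) : Type v :=
  ↥(LinearMap.ker X.d) ⧸ (LinearMap.range X.d).comap (LinearMap.ker X.d).subtype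

/-- The direct sum of two objects of `C₁(𝒫)`. -/
def dsum (X Y : Cyc A) : Cyc A where
  carrier := X.carrier × Y.carrier
  projective := inferInstance
  finite := inferInstance
  d := X.d.prodMap Y.d
  dsq := by
    apply LinearMap.ext; intro p
    have hx := LinearMap.congr_fun X.dsq p.1
    have hy := LinearMap.congr_fun Y.dsq p.2
    simp only [LinearMap.comp_apply, LinearMap.prodMap_apply, LinearMap.zero_apply] at *
    exact Prod.ext hx hy

theorem projective_pi {R : Type*} [Ring R] {ι : Type*} [Fintype ι] [DecidableEq ι]
    {M : ι → Type*} [∀ i, AddCommGroup (M i)] [∀ i, Module R (M i)]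
    (h : ∀ i, Module.Projective R (M i)) : Module.Projective R (∀ i, M i) := by
  haveI := h
  haveI : Module.Projective R (DirectSum ι M) :=
    inferInstanceAs (Module.Projective R (Π₀ i, M i))
  exact Module.Projective.of_equiv (DirectSum.linearEquivFunOnFintype R ι M)

/-- The direct sum of `m` copies of an object of `C₁(𝒫)`. -/
def pow (X : Cyc A) (m : ℕ) : Cyc A where
  carrier := Fin m → X.carrier
  projective := projective_pi fun _ => X.projective
  finite := Module.Finite.pi
  d := LinearMap.pi fun i => X.d ∘ₗ LinearMap.proj i
  dsq := by
    apply LinearMap.ext; intro v; funext i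
    have := LinearMap.congr_fun X.dsq (v i)
    simpa using this

/-- A finite direct sum `⊕_{i ∈ supp λ} λ(i)·(f i)` of objects of `C₁(𝒫)`. -/
noncomputable def big {ι : Type} [DecidableEq ι] (f : ι → Cyc A) (lam : ι →₀ ℕ) : Cyc A where
  carrier := ∀ i : lam.support, Fin (lam i) → (f i).carrier
  projective := projective_pi fun i => projective_pi fun _ => (f i).projective
  finite := Module.Finite.pi
  d := LinearMap.pi fun i => (LinearMap.pi fun j => (f i).d ∘ₗ LinearMap.proj j) ∘ₗ
    LinearMap.proj i
  dsq := by
    apply LinearMap.ext; intro v; funext i j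
    have := LinearMap.congr_fun (f i).dsq (v i j)
    simpa using this

end Cyc

/-- The object of `C₁(𝒫)` attached to a projective module: `C_P = (P, 0)`. -/
def CycOfProj {A : Type v} [Ring A] (P : Type v) [AddCommGroup P] [Module A P]
    (hp : Module.Projective A P) (hf : Module.Finite A P) : Cyc A where
  carrier := P
  projective := hp
  finite := hf
  d := 0
  dsq := by simp

/-- The object `C_f = (P ⊕ Ω, ((0,f),(0,0)))` of `C₁(𝒫)` attached to a homomorphism
`f : Ω → P` of projective modules. -/
def CycOfMap {A : Type v} [Ring A] {P Ω : Type v} [AddCommGroup P] [Module A P]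
    [AddCommGroup Ω] [Module A Ω] (hp : Module.Projective A P) (hf : Module.Finite A P)
    (hp' : Module.Projective A Ω) (hf' : Module.Finite A Ω) (f : Ω →ₗ[A] P) : Cyc A where
  carrier := P × Ω
  projective := letI := hp; letI := hp'; inferInstance
  finite := letI := hf; letI := hf'; inferInstance
  d := LinearMap.inl A P Ω ∘ₗ f ∘ₗ LinearMap.snd A P Ω
  dsq := by apply LinearMap.ext; intro p; simp

/-- The projective-injective object `K_P = C_{Id_P}` of `C₁(𝒫)`. -/
def KLift {A : Type v} [Ring A] (P : Type v) [AddCommGroup P] [Module A P]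
    (hp : Module.Projective A P) (hf : Module.Finite A P) : Cyc A :=
  CycOfMap hp hf hp hf LinearMap.id

/-- `C_{P_i} = (P_i, 0)` for the indecomposable projective `P_i`. -/
noncomputable def CycP {n : ℕ} (k : Type) [Field k] (Q : QuivData n) (i : Fin n) :
    Cyc (PathAlg k Q) :=
  CycOfProj (ProjMod k Q i) (projMod_projective k Q i) (projMod_finite k Q i)

/-- `K_{P_i} = C_{Id_{P_i}}` for the indecomposable projective `P_i`. -/
noncomputable def KP {n : ℕ} (k : Type) [Field k] (Q : QuivData n) (i : Fin n) :
    Cyc (PathAlg k Q) :=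
  KLift (ProjMod k Q i) (projMod_projective k Q i) (projMod_finite k Q i)

/-! ### Dimension vectors and the Euler form -/

/-- The dimension vector of a module over the path algebra:
`(dim M)_i = dim_k (e_i · M)`. -/
noncomputable def dimVec {n : ℕ} (k : Type) [Field k] (Q : QuivData n) (M : Type*)
    [AddCommGroup M] [Module (PathAlg k Q) M] : Fin n → ℕ := fun i =>
  letI : Module k M := Module.compHom M (algebraMap k (PathAlg k Q))
  Module.finrank k ↥(LinearMap.range
    ({ toFun := fun x => eVert k Q i • x
       map_add' := fun x y => smul_add _ x y
       map_smul' := fun c x => by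
         show eVert k Q i • ((algebraMap k (PathAlg k Q) c) • x) =
           (algebraMap k (PathAlg k Q) c) • (eVert k Q i • x)
         rw [smul_smul, smul_smul, Algebra.commutes] } : M →ₗ[k] M))

/-- The Euler form of the quiver `Q` on dimension vectors:
`⟨x, y⟩ = ∑ᵢ xᵢ yᵢ - ∑_{a : i → j} xᵢ yⱼ`. -/
def eulerVec {n : ℕ} (Q : QuivData n) (x y : Fin n → ℕ) : ℤ :=
  ∑ i, (x i : ℤ) * (y i : ℤ) - ∑ i, ∑ j, (Q.arrows i j : ℤ) * (x i : ℤ) * (y j : ℤ)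

/-- The Euler form `⟨M, N⟩ = dim Hom(M,N) - dim Ext¹(M,N)` of modules over the (hereditary)
path algebra, computed by the standard formula in terms of dimension vectors. -/
noncomputable def eulerMod {n : ℕ} (k : Type) [Field k] (Q : QuivData n)
    (M N : Type*) [AddCommGroup M] [Module (PathAlg k Q) M]
    [AddCommGroup N] [Module (PathAlg k Q) N] : ℤ :=
  eulerVec Q (dimVec k Q M) (dimVec k Q N)

/-! ### Hom spaces in the homotopy category and extension groups -/

namespace Cyc

variable {A : Type v} [Ring A]

/-- The abelian group of chain maps `X → Y`. -/
def homSubgroup (X Y : Cyc A) : AddSubgroup (X.carrier →ₗ[A] Y.carrier) where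
  carrier := {f | Y.d ∘ₗ f = f ∘ₗ X.d}
  add_mem' := by
    intro a b ha hb
    simp only [Set.mem_setOf_eq, LinearMap.comp_add, LinearMap.add_comp] at *
    rw [ha, hb]
  zero_mem' := by simp
  neg_mem' := by
    intro a ha
    simp only [Set.mem_setOf_eq, LinearMap.comp_neg, LinearMap.neg_comp] at *
    rw [ha]

/-- The subgroup of null-homotopic chain maps, `f = s ∘ d_X + d_Y ∘ s`. -/
def htpySubgroup (X Y : Cyc A) : AddSubgroup ↥(homSubgroup X Y) where
  carrier := {f | ∃ s : X.carrier →ₗ[A] Y.carrier,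
    (f : X.carrier →ₗ[A] Y.carrier) = s ∘ₗ X.d + Y.d ∘ₗ s}
  add_mem' := by
    rintro a b ⟨s, hs⟩ ⟨t, ht⟩
    exact ⟨s + t, by
      push_cast [hs, ht]
      rw [LinearMap.add_comp, LinearMap.comp_add]
      abel⟩
  zero_mem' := ⟨0, by simp⟩
  neg_mem' := by
    rintro a ⟨s, hs⟩
    exact ⟨-s, by
      push_cast [hs]
      rw [LinearMap.neg_comp, LinearMap.comp_neg]
      abel⟩

/-- The Hom-space `Hom_{K₁(𝒫)}(X, Y)` in the homotopy category: chain maps modulo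
homotopy. -/
def HomK (X Y : Cyc A) : Type v := ↥(homSubgroup X Y) ⧸ htpySubgroup X Y

/-- A conflation `0 → Y → Z → X → 0` with fixed end terms. -/
structure Conflation (X Y : Cyc A) : Type (v + 1) where
  mid : Cyc A
  i : Y ⟶ mid
  p : mid ⟶ X
  conf : IsConflation i p

/-- Equivalence of conflations (morphisms of short exact sequences fixing the end terms;
    such a morphism is automatically an isomorphism). -/
def conflationRel (X Y : Cyc A) (a b : Conflation X Y) : Prop :=
  ∃ h : a.mid ⟶ b.mid, a.i ≫ h = b.i ∧ h ≫ b.p = a.p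

/-- The extension group `Ext¹_{C₁(𝒫)}(X, Y)`: equivalence classes of conflations
`0 → Y → Z → X → 0`. -/
def ExtC (X Y : Cyc A) : Type (v + 1) := Quot (conflationRel X Y)

end Cyc

/-- An indecomposable module: nonzero, with no nontrivial idempotent endomorphism. -/
def ModIndec (A : Type v) [Ring A] (M : Type v) [AddCommGroup M] [Module A M] : Prop :=
  Nontrivial M ∧ ∀ e : M →ₗ[A] M, e ∘ₗ e = e → e = LinearMap.id ∨ e = 0

/-! ### Hall algebras -/

/-- The Hall algebra `H(C₁(𝒫))`: a `ℂ`-algebra with basis the isomorphism classes of objects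
of `C₁(𝒫)`, the product of two basis elements having the Hall numbers as coefficients:
`[X]·[Y] = ∑_{[Z]} F^Z_{X Y} [Z]`. -/
structure HallAlg (k : Type) [Field k] {n : ℕ} (Q : QuivData n) where
  carrier : Type w
  [ring : Ring carrier]
  [alg : Algebra ℂ carrier]
  bas : Module.Basis (IsoCls (PathAlg k Q)) ℂ carrier
  mul_bas : ∀ X Y Z : Cyc (PathAlg k Q),
    (bas.repr (bas (Cyc.cls X) * bas (Cyc.cls Y))) (Cyc.cls Z) = (Cyc.hallNum X Y Z : ℂ)

attribute [instance] HallAlg.ring HallAlg.alg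

/-- The twisted Hall algebra `H_tw(C₁(𝒫))`, with multiplication
`[X] * [Y] = v^{-⟨Y₀, X₀⟩} ∑_{[Z]} F^Z_{X Y} [Z]` where `v = √q`. -/
structure TwHallAlg (k : Type) [Field k] [Fintype k] {n : ℕ} (Q : QuivData n) where
  carrier : Type w
  [ring : Ring carrier]
  [alg : Algebra ℂ carrier]
  bas : Module.Basis (IsoCls (PathAlg k Q)) ℂ carrier
  mul_bas : ∀ X Y Z : Cyc (PathAlg k Q),
    (bas.repr (bas (Cyc.cls X) * bas (Cyc.cls Y))) (Cyc.cls Z) =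
      (Real.sqrt (Fintype.card k) : ℂ) ^ (-(eulerMod k Q Y.carrier X.carrier)) *
        (Cyc.hallNum X Y Z : ℂ)

attribute [instance] TwHallAlg.ring TwHallAlg.alg

/-! ### Parametrization of the objects of `C₁(𝒫)` and Hall polynomials -/

/-- `𝔓₁(Γ)`: the parametrizing set of the isomorphism classes of objects of `C₁(𝒫)`;
`λ(α)` is the multiplicity of `C_{M(α)}` for a positive root `α`, and `λ(i)` the multiplicity
of `K_{P_i}` for a vertex `i`. -/
def Param {n : ℕ} (Q : QuivData n) : Type := (Q.PosRoot ⊕ Fin n) →₀ ℕ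

/-- A realization over the field `k` of the parametrizing data: a choice, for every positive
root `α`, of an object `C_{M(α)}` of `C₁(𝒫)`; these are exactly the indecomposable
non-projective objects `X` with `dim H₀(X) = α`. -/
structure Realization (k : Type) [Field k] {n : ℕ} (Q : QuivData n) where
  Cobj : Q.PosRoot → Cyc (PathAlg k Q)
  indec : ∀ α, (Cobj α).Indec
  nonproj : ∀ α, ¬ Cyc.ProjObj (Cobj α)
  dvec : ∀ α, dimVec k Q (Cyc.H0 (Cobj α)) = α.1

/-- The object `C(λ) = (⊕_α λ(α) C_{M(α)}) ⊕ (⊕_i λ(i) K_{P_i})` of `C₁(𝒫)` attached to a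
parameter `λ ∈ 𝔓₁(Γ)`. -/
noncomputable def Realization.obj {k : Type} [Field k] {n : ℕ} {Q : QuivData n}
    (R : Realization k Q) (lam : Param Q) : Cyc (PathAlg k Q) :=
  letI := Classical.decEq (Q.PosRoot ⊕ Fin n)
  Cyc.big (Sum.elim R.Cobj fun i => KP k Q i) lam

/-- The degenerate Hall algebra `H₁(C₁(𝒫))`: basis indexed by `𝔓₁(Γ)`, with structure
constants the values at `1` of the Hall polynomials, i.e. of the polynomials whose value at
every prime power `q` is the corresponding Hall number of `C₁(𝒫)` over `F_q`. -/
structure DegHall {n : ℕ} (Q : QuivData n) where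
  carrier : Type w
  [ring : Ring carrier]
  [alg : Algebra ℂ carrier]
  bas : Module.Basis (Param Q) ℂ carrier
  mul_bas : ∀ μ ν lam : Param Q, ∃ ψ : Polynomial ℤ,
    (bas.repr (bas μ * bas ν)) lam = ((ψ.eval 1 : ℤ) : ℂ) ∧
    ∀ (p m : ℕ) [Fact p.Prime], 0 < m →
      ∀ R : Realization (GaloisField p m) Q,
        ψ.eval ((p : ℤ) ^ m) = Cyc.hallNum (R.obj μ) (R.obj ν) (R.obj lam)

attribute [instance] DegHall.ring DegHall.alg

/-! ### Modules, module Hall numbers and the degenerate Hall algebra of `A` -/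

/-- A bundled finite dimensional module. -/
structure ModB (A : Type v) [Ring A] : Type (v + 1) where
  carrier : Type v
  [acg : AddCommGroup carrier]
  [mod : Module A carrier]
  finite : Module.Finite A carrier

attribute [instance] ModB.acg ModB.mod ModB.finite

namespace ModB

variable {A : Type v} [Ring A]

/-- Short exact sequences of modules `0 → Y → Z → X → 0`. -/
def SES (X Y Z : ModB A) : Type v :=
  {p : (Y.carrier →ₗ[A] Z.carrier) × (Z.carrier →ₗ[A] X.carrier) //
    Function.Injective p.1 ∧ Function.Surjective p.2 ∧ LinearMap.range p.1 = LinearMap.ker p.2}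

/-- The orbit relation of the free action of `Aut X × Aut Y` on short exact sequences. -/
def sesRel (X Y Z : ModB A) (p q : SES X Y Z) : Prop :=
  ∃ (f : X.carrier ≃ₗ[A] X.carrier) (g : Y.carrier ≃ₗ[A] Y.carrier),
    q.1.1 = p.1.1 ∘ₗ (g.symm : Y.carrier →ₗ[A] Y.carrier) ∧
      q.1.2 = (f : X.carrier →ₗ[A] X.carrier) ∘ₗ p.1.2

/-- The Hall number `F^Z_{X Y}` for modules. -/
noncomputable def hallNum (X Y Z : ModB A) : ℕ := Nat.card (Quot (sesRel X Y Z))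

/-- An indecomposable module. -/
def Indec (M : ModB A) : Prop := ModIndec A M.carrier

/-- The finite direct sum `⊕_{i ∈ supp λ} λ(i)·(f i)` of modules. -/
def big {ι : Type} [DecidableEq ι] (f : ι → ModB A) (lam : ι →₀ ℕ) : ModB A where
  carrier := ∀ i : lam.support, Fin (lam i) → (f i).carrier
  finite := Module.Finite.pi

end ModB

/-- The parametrizing set of isomorphism classes of `A`-modules: multiplicity functions on the
positive roots (Gabriel's theorem). -/
def ModParam {n : ℕ} (Q : QuivData n) : Type := Q.PosRoot →₀ ℕ

/-- A realization over `k` of the parametrizing data for modules: a choice, for every positive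
root `α`, of an indecomposable module `M(α)` with dimension vector `α`. -/
structure MRealization (k : Type) [Field k] {n : ℕ} (Q : QuivData n) where
  Mobj : Q.PosRoot → ModB (PathAlg k Q)
  indec : ∀ α, (Mobj α).Indec
  dvec : ∀ α, dimVec k Q (Mobj α).carrier = α.1

/-- The module `M(λ) = ⊕_α λ(α) M(α)` attached to a parameter `λ`. -/
noncomputable def MRealization.obj {k : Type} [Field k] {n : ℕ} {Q : QuivData n}
    (R : MRealization k Q) (lam : ModParam Q) : ModB (PathAlg k Q) :=
  letI := Classical.decEq Q.PosRoot
  ModB.big R.Mobj lam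

/-- The degenerate Hall algebra `H₁(A)` of the path algebra `A = kQ`: basis indexed by the
isomorphism classes of modules, with structure constants the values at `1` of the Hall
polynomials of `mod A` (which exist by Ringel's theorem). -/
structure DegHallMod {n : ℕ} (Q : QuivData n) where
  carrier : Type w
  [ring : Ring carrier]
  [alg : Algebra ℂ carrier]
  bas : Module.Basis (ModParam Q) ℂ carrier
  mul_bas : ∀ μ ν lam : ModParam Q, ∃ ψ : Polynomial ℤ,
    (bas.repr (bas μ * bas ν)) lam = ((ψ.eval 1 : ℤ) : ℂ) ∧
    ∀ (p m : ℕ) [Fact p.Prime], 0 < m →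
      ∀ R : MRealization (GaloisField p m) Q,
        ψ.eval ((p : ℤ) ^ m) = ModB.hallNum (R.obj μ) (R.obj ν) (R.obj lam)

attribute [instance] DegHallMod.ring DegHallMod.alg

/-! ### Quotients by two-sided ideals -/

/-- The ring congruence generated by `s ~ 0` for `s ∈ S`; the corresponding quotient is the
quotient of `F` by the two-sided ideal generated by `S`. -/
def idealCon {F : Type w} [Ring F] (S : Set F) : RingCon F :=
  ringConGen (fun a b => a ∈ S ∧ b = 0)

/-- The quotient of `F` by the two-sided ideal generated by `S`. -/
def QuotBy {F : Type w} [Ring F] (S : Set F) : Type w := (idealCon S).Quotient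

noncomputable instance {F : Type w} [Ring F] (S : Set F) : Ring (QuotBy S) :=
  inferInstanceAs (Ring (idealCon S).Quotient)

noncomputable instance {F : Type w} [Ring F] [Algebra ℂ F] (S : Set F) :
    Algebra ℂ (QuotBy S) :=
  inferInstanceAs (Algebra ℂ (idealCon S).Quotient)

/-- The canonical projection onto the quotient by the two-sided ideal generated by `S`. -/
noncomputable def quotMap {F : Type w} [Ring F] [Algebra ℂ F] (S : Set F) :
    F →ₐ[ℂ] QuotBy S :=
  { (idealCon S).mk' with commutes' := fun _ => rfl }
/-- The dimension vector of the simple module `S_i`: the `i`-th unit vector. -/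
def unitVec {n : ℕ} (i : Fin n) : Fin n → ℕ := fun j => if j = i then 1 else 0

theorem unitVec_isPosRoot {n : ℕ} (Q : QuivData n) (hQ : Q.Acyclic) (i : Fin n) :
    unitVec i ≠ 0 ∧ Q.titsForm (unitVec i) = 1 := by
  have hii : Q.arrows i i = 0 := by
    by_contra h
    exact hQ i (Relation.TransGen.single h)
  constructor
  · intro h
    have := congrFun h i
    simp [unitVec] at this
  · have h1 : (∑ j, ((unitVec i j : ℤ)) ^ 2) = 1 := by
      simp [unitVec, apply_ite (fun t : ℕ => (t : ℤ)), Finset.sum_ite_eq']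
    have h2 : (∑ a, ∑ b, (Q.arrows a b : ℤ) * (unitVec i a : ℤ) * (unitVec i b : ℤ)) = 0 := by
      simp [unitVec, apply_ite (fun t : ℕ => (t : ℤ)), mul_ite, ite_mul,
        Finset.sum_ite_eq', hii]
    unfold QuivData.titsForm
    rw [h1, h2]
    ring

/-- `dim_k End_A(M)`. -/
noncomputable def endRank (k : Type) [Field k] {n : ℕ} (Q : QuivData n) (M : Type)
    [AddCommGroup M] [Module (PathAlg k Q) M] : ℕ :=
  letI : Module k M := Module.compHom M (algebraMap k (PathAlg k Q))
  letI : SMulCommClass (PathAlg k Q) k M :=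
    ⟨fun a c x => by
      show a • (algebraMap k (PathAlg k Q) c • x) = algebraMap k (PathAlg k Q) c • (a • x)
      rw [smul_smul, smul_smul, Algebra.commutes]⟩
  Module.finrank k (M →ₗ[PathAlg k Q] M)

/-! ### Auxiliary: finite dimensionality of the path algebra of an acyclic quiver -/

section PathAlgFin

variable {n : ℕ} (k : Type) [Field k] (Q : QuivData n)

/-- Generators of the path algebra. -/
noncomputable def genA : Q.Gens → PathAlg k Q :=
  fun g => RingQuot.mkAlgHom k (PathRel k Q) (FreeAlgebra.ι k g)

/-- Arrow triples. -/
abbrev ArrT (Q : QuivData n) : Type := Σ i j : Fin n, Fin (Q.arrows i j)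

theorem E_mul_E (i j : Fin n) :
    eVert k Q i * eVert k Q j = if i = j then eVert k Q i else 0 := by
  split
  · next h => subst h; exact eVert_mul_self k Q i
  · next h =>
      have h2 := RingQuot.mkAlgHom_rel k (PathRel.orth (k := k) (Q := Q) i j h)
      exact (map_mul (RingQuot.mkAlgHom k (PathRel k Q)) _ _).symm.trans (h2.trans (map_zero _))

theorem arr_eq (t : ArrT Q) :
    eVert k Q t.2.1 * genA k Q (Sum.inr t) * eVert k Q t.1 = genA k Q (Sum.inr t) := by
  have h := RingQuot.mkAlgHom_rel k (PathRel.arrow (k := k) (Q := Q) t.1 t.2.1 t.2.2)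
  exact ((congrArg (· * eVert k Q t.1) (map_mul (RingQuot.mkAlgHom k (PathRel k Q))
    (FreeAlgebra.ι k (Sum.inl t.2.1)) (FreeAlgebra.ι k (Sum.inr t))).symm).trans
    (map_mul (RingQuot.mkAlgHom k (PathRel k Q))
    (FreeAlgebra.ι k (Sum.inl t.2.1) * FreeAlgebra.ι k (Sum.inr t))
    (FreeAlgebra.ι k (Sum.inl t.1))).symm).trans h

theorem E_mul_arr (l : Fin n) (t : ArrT Q) :
    eVert k Q l * genA k Q (Sum.inr t) =
      if l = t.2.1 then genA k Q (Sum.inr t) else 0 := by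
  conv_lhs => rw [← arr_eq k Q t]
  rw [← mul_assoc, ← mul_assoc, E_mul_E]
  split
  · next h => subst h; exact arr_eq k Q t
  · simp

theorem arr_mul_E (t : ArrT Q) (l : Fin n) :
    genA k Q (Sum.inr t) * eVert k Q l =
      if l = t.1 then genA k Q (Sum.inr t) else 0 := by
  conv_lhs => rw [← arr_eq k Q t]
  rw [mul_assoc, mul_assoc, E_mul_E]
  split
  · next h => rw [if_pos h.symm, ← mul_assoc, arr_eq]
  · next h => rw [if_neg (fun hh => h hh.symm)]; simp

/-- Products of words of generators. -/
noncomputable def wordProd (l : List Q.Gens) : PathAlg k Q := (l.map (genA k Q)).prod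

theorem wordProd_nil : wordProd k Q [] = 1 := rfl

theorem wordProd_cons (g : Q.Gens) (l : List Q.Gens) :
    wordProd k Q (g :: l) = genA k Q g * wordProd k Q l := by
  simp [wordProd]

theorem wordProd_append (l l' : List Q.Gens) :
    wordProd k Q (l ++ l') = wordProd k Q l * wordProd k Q l' := by
  simp [wordProd]

theorem mem_span_words (x : PathAlg k Q) :
    x ∈ Submodule.span k (Set.range (wordProd k Q)) := by
  set T := Submodule.span k (Set.range (wordProd k Q)) with hT
  have hmul : ∀ x ∈ T, ∀ y ∈ T, x * y ∈ T := by
    intro x hx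
    induction hx using Submodule.span_induction with
    | mem x hx =>
        obtain ⟨l, rfl⟩ := hx
        intro y hy
        induction hy using Submodule.span_induction with
        | mem y hy =>
            obtain ⟨l', rfl⟩ := hy
            exact Submodule.subset_span ⟨l ++ l', wordProd_append k Q l l'⟩
        | zero => simpa using Submodule.zero_mem T
        | add y z _ _ hy hz => rw [mul_add]; exact Submodule.add_mem T hy hz
        | smul c y _ hy => rw [mul_smul_comm]; exact Submodule.smul_mem T c hy
    | zero => intro y hy; simpa using Submodule.zero_mem T
    | add x z _ _ hx hz => intro y hy; rw [add_mul]; exact Submodule.add_mem T (hx y hy) (hz y hy)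
    | smul c x _ hx => intro y hy; rw [smul_mul_assoc]; exact Submodule.smul_mem T c (hx y hy)
  obtain ⟨y, rfl⟩ := RingQuot.mkAlgHom_surjective k (PathRel k Q) x
  induction y using FreeAlgebra.induction with
  | grade0 r =>
      have : (RingQuot.mkAlgHom k (PathRel k Q)) ((algebraMap k (FreeAlgebra k Q.Gens)) r)
          = r • (1 : PathAlg k Q) := by
        rw [AlgHom.commutes, Algebra.algebraMap_eq_smul_one]
        rfl
      rw [this]
      exact Submodule.smul_mem T r (Submodule.subset_span ⟨[], rfl⟩)
  | grade1 g => exact Submodule.subset_span ⟨[g], mul_one _⟩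
  | mul a b ha hb => rw [map_mul]; exact hmul _ ha _ hb
  | add a b ha hb => rw [map_add]; exact Submodule.add_mem T ha hb

/-- Words of arrows. -/
noncomputable def aWord (l : List (ArrT Q)) : PathAlg k Q := wordProd k Q (l.map Sum.inr)

/-- Composability relation on consecutive arrows (left factor's source is right factor's
target). -/
def ArrComp : ArrT Q → ArrT Q → Prop := fun t s => t.1 = s.2.1

theorem aWord_cons (t : ArrT Q) (l : List (ArrT Q)) :
    aWord k Q (t :: l) = genA k Q (Sum.inr t) * aWord k Q l := by
  exact wordProd_cons k Q _ _

/-- Normal forms for elements of the path algebra. -/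
def GoodElt (x : PathAlg k Q) : Prop :=
  x = 0 ∨ x = 1 ∨ (∃ i, x = eVert k Q i) ∨
    (∃ l : List (ArrT Q), l ≠ [] ∧ List.Chain' (ArrComp Q) l ∧ x = aWord k Q l)

theorem good_E_mul (i : Fin n) (x : PathAlg k Q) (h : GoodElt k Q x) :
    GoodElt k Q (eVert k Q i * x) := by
  rcases h with rfl | rfl | ⟨j, rfl⟩ | ⟨l, hne, hch, rfl⟩
  · left; simp
  · right; right; left; exact ⟨i, by simp⟩
  · rw [E_mul_E]
    split
    · right; right; left; exact ⟨i, rfl⟩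
    · left; rfl
  · cases l with
    | nil => exact absurd rfl hne
    | cons t r =>
        rw [aWord_cons, ← mul_assoc, E_mul_arr]
        split
        · right; right; right; exact ⟨t :: r, hne, hch, (aWord_cons k Q t r).symm⟩
        · left; simp

theorem good_arr_mul (t : ArrT Q) (x : PathAlg k Q) (h : GoodElt k Q x) :
    GoodElt k Q (genA k Q (Sum.inr t) * x) := by
  rcases h with rfl | rfl | ⟨j, rfl⟩ | ⟨l, hne, hch, rfl⟩
  · left; simp
  · right; right; right
    exact ⟨[t], by simp, List.isChain_singleton t, rfl⟩
  · rw [arr_mul_E]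
    split
    · right; right; right
      exact ⟨[t], by simp, List.isChain_singleton t, (mul_one _).symm⟩
    · left; rfl
  · cases l with
    | nil => exact absurd rfl hne
    | cons s r =>
        have habs : eVert k Q s.2.1 * aWord k Q (s :: r) = aWord k Q (s :: r) := by
          rw [aWord_cons, ← mul_assoc, E_mul_arr, if_pos rfl]
        have key : genA k Q (Sum.inr t) * aWord k Q (s :: r)
            = (if s.2.1 = t.1 then genA k Q (Sum.inr t) else 0) * aWord k Q (s :: r) := by
          conv_lhs => rw [← habs]
          rw [← mul_assoc, arr_mul_E]
        rw [key]
        rcases eq_or_ne s.2.1 t.1 with heq | hne2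
        · rw [if_pos heq]
          right; right; right
          exact ⟨t :: s :: r, by simp, List.isChain_cons_cons.2 ⟨heq.symm, hch⟩,
            (aWord_cons k Q t (s :: r)).symm⟩
        · rw [if_neg hne2]; left; simp

theorem good_wordProd (l : List Q.Gens) : GoodElt k Q (wordProd k Q l) := by
  induction l with
  | nil => right; left; rfl
  | cons g r ih =>
      rw [wordProd_cons]
      cases g with
      | inl i => exact good_E_mul k Q i _ ih
      | inr t => exact good_arr_mul k Q t _ ih

theorem chain_step (l : List (ArrT Q)) (hch : List.Chain' (ArrComp Q) l)
    (i : ℕ) (h : i + 1 < l.length) :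
    Q.Step (l.get ⟨i + 1, h⟩).2.1 (l.get ⟨i, Nat.lt_of_succ_lt h⟩).2.1 := by
  have hr := List.isChain_iff_getElem.1 hch i (by omega)
  have : (l.get ⟨i, Nat.lt_of_succ_lt h⟩).1 = (l.get ⟨i + 1, h⟩).2.1 := hr
  rw [← this]
  have hpos : 0 < Q.arrows (l.get ⟨i, Nat.lt_of_succ_lt h⟩).1
      (l.get ⟨i, Nat.lt_of_succ_lt h⟩).2.1 := (l.get ⟨i, Nat.lt_of_succ_lt h⟩).2.2.pos
  show Q.arrows _ _ ≠ 0
  omega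

theorem chain_hasPath (l : List (ArrT Q)) (hch : List.Chain' (ArrComp Q) l)
    (i j : ℕ) (hij : i < j) (hj : j < l.length) :
    Q.HasPath (l.get ⟨j, hj⟩).2.1 (l.get ⟨i, Nat.lt_trans hij hj⟩).2.1 := by
  induction j with
  | zero => omega
  | succ m ih =>
      rcases Nat.lt_or_ge i m with him | him
      · exact Relation.TransGen.head (chain_step Q l hch m hj) (ih him (by omega))
      · have : i = m := by omega
        subst this
        exact Relation.TransGen.single (chain_step Q l hch i hj)

theorem chain_length (hQ : Q.Acyclic) (l : List (ArrT Q)) (hch : List.Chain' (ArrComp Q) l) :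
    l.length ≤ n := by
  by_contra hlen
  push_neg at hlen
  have hcard : Fintype.card (Fin n) < Fintype.card (Fin l.length) := by simpa using hlen
  obtain ⟨a, b, hab, heq⟩ := Fintype.exists_ne_map_eq_of_card_lt
    (fun j : Fin l.length => (l.get j).2.1) hcard
  rcases lt_or_gt_of_ne hab with h | h
  · have hpa := chain_hasPath Q l hch a b h b.isLt
    simp only [Fin.eta] at hpa
    rw [heq] at hpa
    exact hQ _ hpa
  · have hpa := chain_hasPath Q l hch b a h a.isLt
    simp only [Fin.eta] at hpa
    rw [← heq] at hpa
    exact hQ _ hpa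

theorem good_mem_span (hQ : Q.Acyclic) (x : PathAlg k Q) (h : GoodElt k Q x) :
    x ∈ Submodule.span k (wordProd k Q '' {l : List Q.Gens | l.length ≤ n}) := by
  rcases h with rfl | rfl | ⟨i, rfl⟩ | ⟨l, hne, hch, rfl⟩
  · exact Submodule.zero_mem _
  · exact Submodule.subset_span ⟨[], Nat.zero_le n, rfl⟩
  · refine Submodule.subset_span ⟨[Sum.inl i], i.pos, ?_⟩
    exact mul_one _
  · refine Submodule.subset_span ⟨l.map Sum.inr, ?_, rfl⟩
    exact (List.length_map ..).trans_le (chain_length Q hQ l hch)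

theorem pathAlg_module_finite (hQ : Q.Acyclic) : Module.Finite k (PathAlg k Q) := by
  haveI : Finite Q.Gens :=
    inferInstanceAs (Finite (Fin n ⊕ Σ i j : Fin n, Fin (Q.arrows i j)))
  have hfin : (wordProd k Q '' {l : List Q.Gens | l.length ≤ n}).Finite :=
    (List.finite_length_le Q.Gens n).image _
  refine ⟨⟨hfin.toFinset, ?_⟩⟩
  rw [Set.Finite.coe_toFinset]
  rw [eq_top_iff]
  intro x _
  have hx := mem_span_words k Q x
  refine Submodule.span_le.2 ?_ hx
  rintro y ⟨l, rfl⟩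
  exact good_mem_span k Q hQ _ (good_wordProd k Q l)

end PathAlgFin

/-! ### Auxiliary: homological lemmas -/

section HomologicalAux

variable {A : Type} [Ring A]

theorem factor_through_surj {L N X : Type} [AddCommGroup L] [Module A L]
    [AddCommGroup N] [Module A N] [AddCommGroup X] [Module A X]
    (p : L →ₗ[A] N) (hp : Function.Surjective p) (f : L →ₗ[A] X)
    (hker : LinearMap.ker p ≤ LinearMap.ker f) : ∃ g : N →ₗ[A] X, g ∘ₗ p = f := by
  refine ⟨(LinearMap.ker p).liftQ f hker ∘ₗ
    (p.quotKerEquivOfSurjective hp).symm.toLinearMap, ?_⟩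
  ext x
  have hx : (p.quotKerEquivOfSurjective hp).symm (p x) = Submodule.Quotient.mk x := by
    apply (p.quotKerEquivOfSurjective hp).injective
    rw [LinearEquiv.apply_symm_apply]
    rfl
  simp only [LinearMap.comp_apply, LinearEquiv.coe_coe, hx, Submodule.liftQ_apply]

theorem factor_through_inj {M L X : Type} [AddCommGroup M] [Module A M]
    [AddCommGroup L] [Module A L] [AddCommGroup X] [Module A X]
    (ι : M →ₗ[A] L) (hι : Function.Injective ι) (f : X →ₗ[A] L)
    (hran : LinearMap.range f ≤ LinearMap.range ι) : ∃ g : X →ₗ[A] M, ι ∘ₗ g = f := by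
  have hι' : ∀ y : LinearMap.range ι, ι ((LinearEquiv.ofInjective ι hι).symm y) = y := by
    intro y
    conv_rhs => rw [← LinearEquiv.apply_symm_apply (LinearEquiv.ofInjective ι hι) y]
    rw [LinearEquiv.ofInjective_apply]
  refine ⟨(LinearEquiv.ofInjective ι hι).symm.toLinearMap ∘ₗ
    f.codRestrict (LinearMap.range ι) (fun x => hran ⟨x, rfl⟩), ?_⟩
  ext x
  simp only [LinearMap.comp_apply, LinearEquiv.coe_coe, LinearMap.codRestrict_apply]
  exact hι' _

theorem exact_finrank {kk : Type} [Field kk] {U V W : Type} [AddCommGroup U] [Module kk U]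
    [AddCommGroup V] [Module kk V] [AddCommGroup W] [Module kk W]
    [FiniteDimensional kk V]
    (Φ : V →ₗ[kk] W) (Ψ : U →ₗ[kk] V) (hinj : Function.Injective Ψ)
    (hex : LinearMap.range Ψ = LinearMap.ker Φ) :
    Module.finrank kk V = Module.finrank kk U + Module.finrank kk (LinearMap.range Φ) := by
  have h1 := LinearMap.finrank_range_add_finrank_ker Φ
  rw [← hex, LinearMap.finrank_range_of_inj hinj] at h1
  omega

end HomologicalAux

section HomMod

variable {kk A : Type} [Field kk] [Ring A] [Algebra kk A]
variable {X Y Z : Type} [AddCommGroup X] [Module A X] [AddCommGroup Y] [Module A Y]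
  [AddCommGroup Z] [Module A Z]
variable [Module kk X] [Module kk Y] [Module kk Z]
variable [IsScalarTower kk A X] [IsScalarTower kk A Y] [IsScalarTower kk A Z]
variable [SMulCommClass A kk X] [SMulCommClass A kk Y] [SMulCommClass A kk Z]

theorem homFinite [Module.Finite kk A] [Module.Finite A X] [Module.Finite A Y] :
    FiniteDimensional kk (X →ₗ[A] Y) := by
  haveI : FiniteDimensional kk X := Module.Finite.trans A X
  haveI : FiniteDimensional kk Y := Module.Finite.trans A Y
  haveI : IsNoetherian kk (X →ₗ[kk] Y) := IsNoetherian.iff_fg.2 inferInstance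
  refine Module.Finite.of_injective
    ({ toFun := fun f : X →ₗ[A] Y => (f.restrictScalars kk : X →ₗ[kk] Y),
       map_add' := fun f g => rfl,
       map_smul' := fun c f => rfl } : (X →ₗ[A] Y) →ₗ[kk] (X →ₗ[kk] Y)) ?_
  intro f g h
  exact LinearMap.ext fun x => DFunLike.congr_fun h x

/-- Precomposition as a `kk`-linear map between hom spaces. -/
def precompL (φ : X →ₗ[A] Y) : (Y →ₗ[A] Z) →ₗ[kk] (X →ₗ[A] Z) where
  toFun g := g ∘ₗ φ
  map_add' g h := rfl
  map_smul' c g := rfl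

/-- Postcomposition as a `kk`-linear map between hom spaces. -/
def postcompL (φ : Y →ₗ[A] Z) : (X →ₗ[A] Y) →ₗ[kk] (X →ₗ[A] Z) where
  toFun g := φ ∘ₗ g
  map_add' g h := LinearMap.ext fun x => by simp
  map_smul' c g := LinearMap.ext fun x => by
    simp only [LinearMap.comp_apply, LinearMap.smul_apply, RingHom.id_apply]
    rw [← algebraMap_smul A c (g x), ← algebraMap_smul A c (φ (g x)), map_smul]

end HomMod

section ProdDecomp

variable {kk A : Type} [Field kk] [Ring A]
variable {M N : Type} [AddCommGroup M] [Module A M] [AddCommGroup N] [Module A N]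
variable [Module kk M] [Module kk N]
variable [SMulCommClass A kk M] [SMulCommClass A kk N]

/-- Decomposition of the endomorphism space of a direct sum. -/
def prodHomEquiv :
    ((M × N) →ₗ[A] (M × N)) ≃ₗ[kk]
      ((M →ₗ[A] M) × (M →ₗ[A] N)) × ((N →ₗ[A] M) × (N →ₗ[A] N)) where
  toFun f := ((LinearMap.fst A M N ∘ₗ f ∘ₗ LinearMap.inl A M N,
               LinearMap.snd A M N ∘ₗ f ∘ₗ LinearMap.inl A M N),
              (LinearMap.fst A M N ∘ₗ f ∘ₗ LinearMap.inr A M N,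
               LinearMap.snd A M N ∘ₗ f ∘ₗ LinearMap.inr A M N))
  invFun q := (q.1.1.prod q.1.2).coprod (q.2.1.prod q.2.2)
  map_add' f g := by
    refine Prod.ext (Prod.ext ?_ ?_) (Prod.ext ?_ ?_) <;> exact LinearMap.ext fun x => by simp
  map_smul' c f := by
    refine Prod.ext (Prod.ext ?_ ?_) (Prod.ext ?_ ?_) <;>
      refine LinearMap.ext fun x => ?_ <;>
      simp only [LinearMap.comp_apply, LinearMap.smul_apply, LinearMap.fst_apply,
        LinearMap.snd_apply, LinearMap.inl_apply, LinearMap.inr_apply, RingHom.id_apply,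
        Prod.smul_fst, Prod.smul_snd]
  left_inv f := by
    apply LinearMap.ext
    rintro ⟨m, nn⟩
    have hx : ((m, nn) : M × N) = (m, 0) + (0, nn) := by simp
    rw [hx, map_add, map_add]
    simp
    simp [show ((0, 0) : M × N) = 0 from rfl]
  right_inv q := by
    obtain ⟨⟨a, b⟩, c, d⟩ := q
    refine Prod.ext (Prod.ext ?_ ?_) (Prod.ext ?_ ?_) <;> exact LinearMap.ext fun x => by simp

end ProdDecomp

/-- For every short exact sequence `0 → M → L → N → 0` of finite dimensional
modules over the path algebra `A = kQ` of a finite acyclic quiver, one has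
`dim_k End_A(L) ≤ dim_k End_A(M ⊕ N)`, with equality if and only if the sequence splits. -/
theorem dim_end_le_of_ses {n : ℕ} (k : Type) [Field k] (Q : QuivData n) (hQ : Q.Acyclic)
    (M L N : Type) [AddCommGroup M] [Module (PathAlg k Q) M]
    [AddCommGroup L] [Module (PathAlg k Q) L] [AddCommGroup N] [Module (PathAlg k Q) N]
    [Module.Finite (PathAlg k Q) M] [Module.Finite (PathAlg k Q) L]
    [Module.Finite (PathAlg k Q) N]
    (ι : M →ₗ[PathAlg k Q] L) (p : L →ₗ[PathAlg k Q] N)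
    (hι : Function.Injective ι) (hp : Function.Surjective p)
    (hexact : LinearMap.range ι = LinearMap.ker p) :
    endRank k Q L ≤ endRank k Q (M × N) ∧
      (endRank k Q L = endRank k Q (M × N) ↔
        ∃ s : N →ₗ[PathAlg k Q] L, p ∘ₗ s = LinearMap.id) := by
  classical
  haveI hAfin : Module.Finite k (PathAlg k Q) := pathAlg_module_finite k Q hQ
  letI : Module k M := Module.compHom M (algebraMap k (PathAlg k Q))
  letI : Module k L := Module.compHom L (algebraMap k (PathAlg k Q))
  letI : Module k N := Module.compHom N (algebraMap k (PathAlg k Q))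
  haveI : IsScalarTower k (PathAlg k Q) M := ⟨fun c a x => by
    show (c • a) • x = (algebraMap k (PathAlg k Q) c) • (a • x)
    rw [Algebra.smul_def, mul_smul]⟩
  haveI : IsScalarTower k (PathAlg k Q) L := ⟨fun c a x => by
    show (c • a) • x = (algebraMap k (PathAlg k Q) c) • (a • x)
    rw [Algebra.smul_def, mul_smul]⟩
  haveI : IsScalarTower k (PathAlg k Q) N := ⟨fun c a x => by
    show (c • a) • x = (algebraMap k (PathAlg k Q) c) • (a • x)
    rw [Algebra.smul_def, mul_smul]⟩
  haveI : SMulCommClass (PathAlg k Q) k M := ⟨fun a c x => by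
    show a • ((algebraMap k (PathAlg k Q) c) • x) = (algebraMap k (PathAlg k Q) c) • (a • x)
    rw [smul_smul, smul_smul, Algebra.commutes]⟩
  haveI : SMulCommClass (PathAlg k Q) k L := ⟨fun a c x => by
    show a • ((algebraMap k (PathAlg k Q) c) • x) = (algebraMap k (PathAlg k Q) c) • (a • x)
    rw [smul_smul, smul_smul, Algebra.commutes]⟩
  haveI : SMulCommClass (PathAlg k Q) k N := ⟨fun a c x => by
    show a • ((algebraMap k (PathAlg k Q) c) • x) = (algebraMap k (PathAlg k Q) c) • (a • x)
    rw [smul_smul, smul_smul, Algebra.commutes]⟩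
  haveI : FiniteDimensional k (L →ₗ[PathAlg k Q] L) := homFinite
  haveI : FiniteDimensional k (M →ₗ[PathAlg k Q] L) := homFinite
  haveI : FiniteDimensional k (M →ₗ[PathAlg k Q] M) := homFinite
  haveI : FiniteDimensional k (M →ₗ[PathAlg k Q] N) := homFinite
  haveI : FiniteDimensional k (N →ₗ[PathAlg k Q] L) := homFinite
  haveI : FiniteDimensional k (N →ₗ[PathAlg k Q] M) := homFinite
  haveI : FiniteDimensional k (N →ₗ[PathAlg k Q] N) := homFinite
  have hpι : ∀ m : M, p (ι m) = 0 := fun m => by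
    have hm : ι m ∈ LinearMap.ker p := hexact ▸ LinearMap.mem_range_self ι m
    simpa using hm
  -- the three left-exact sequences of hom spaces
  let Φ₁ : (L →ₗ[PathAlg k Q] L) →ₗ[k] (M →ₗ[PathAlg k Q] L) := precompL ι
  let Ψ₁ : (N →ₗ[PathAlg k Q] L) →ₗ[k] (L →ₗ[PathAlg k Q] L) := precompL p
  let Φ₂ : (M →ₗ[PathAlg k Q] L) →ₗ[k] (M →ₗ[PathAlg k Q] N) := postcompL p
  let Ψ₂ : (M →ₗ[PathAlg k Q] M) →ₗ[k] (M →ₗ[PathAlg k Q] L) := postcompL ι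
  let Φ₃ : (N →ₗ[PathAlg k Q] L) →ₗ[k] (N →ₗ[PathAlg k Q] N) := postcompL p
  let Ψ₃ : (N →ₗ[PathAlg k Q] M) →ₗ[k] (N →ₗ[PathAlg k Q] L) := postcompL ι
  have hinj₁ : Function.Injective Ψ₁ := by
    intro g g' h
    ext x
    obtain ⟨y, rfl⟩ := hp x
    exact DFunLike.congr_fun h y
  have hex₁ : LinearMap.range Ψ₁ = LinearMap.ker Φ₁ := by
    ext f
    simp only [LinearMap.mem_range, LinearMap.mem_ker]
    constructor
    · rintro ⟨g, rfl⟩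
      show (g ∘ₗ p) ∘ₗ ι = 0
      ext m
      simp [hpι m]
    · intro hf
      have hker : LinearMap.ker p ≤ LinearMap.ker f := by
        rw [← hexact]
        rintro x ⟨m, rfl⟩
        have hfm := DFunLike.congr_fun hf m
        exact hfm
      obtain ⟨g, hg⟩ := factor_through_surj p hp f hker
      exact ⟨g, hg⟩
  have hinj₂ : Function.Injective Ψ₂ := by
    intro g g' h
    exact LinearMap.ext fun x => hι (DFunLike.congr_fun h x)
  have hex₂ : LinearMap.range Ψ₂ = LinearMap.ker Φ₂ := by
    ext f
    simp only [LinearMap.mem_range, LinearMap.mem_ker]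
    constructor
    · rintro ⟨g, rfl⟩
      show p ∘ₗ (ι ∘ₗ g) = 0
      ext m
      simp [hpι]
    · intro hf
      have hran : LinearMap.range f ≤ LinearMap.range ι := by
        rw [hexact]
        rintro x ⟨m, rfl⟩
        have hfm := DFunLike.congr_fun hf m
        exact hfm
      obtain ⟨g, hg⟩ := factor_through_inj ι hι f hran
      exact ⟨g, hg⟩
  have hinj₃ : Function.Injective Ψ₃ := by
    intro g g' h
    exact LinearMap.ext fun x => hι (DFunLike.congr_fun h x)
  have hex₃ : LinearMap.range Ψ₃ = LinearMap.ker Φ₃ := by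
    ext f
    simp only [LinearMap.mem_range, LinearMap.mem_ker]
    constructor
    · rintro ⟨g, rfl⟩
      show p ∘ₗ (ι ∘ₗ g) = 0
      ext m
      simp [hpι]
    · intro hf
      have hran : LinearMap.range f ≤ LinearMap.range ι := by
        rw [hexact]
        rintro x ⟨m, rfl⟩
        have hfm := DFunLike.congr_fun hf m
        exact hfm
      obtain ⟨g, hg⟩ := factor_through_inj ι hι f hran
      exact ⟨g, hg⟩
  have e1 := exact_finrank Φ₁ Ψ₁ hinj₁ hex₁
  have e2 := exact_finrank Φ₂ Ψ₂ hinj₂ hex₂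
  have e3 := exact_finrank Φ₃ Ψ₃ hinj₃ hex₃
  have b1 : Module.finrank k (LinearMap.range Φ₁) ≤ Module.finrank k (M →ₗ[PathAlg k Q] L) :=
    Submodule.finrank_le _
  have b2 : Module.finrank k (LinearMap.range Φ₂) ≤ Module.finrank k (M →ₗ[PathAlg k Q] N) :=
    Submodule.finrank_le _
  have b3 : Module.finrank k (LinearMap.range Φ₃) ≤ Module.finrank k (N →ₗ[PathAlg k Q] N) :=
    Submodule.finrank_le _
  have ha : endRank k Q L = Module.finrank k (L →ₗ[PathAlg k Q] L) := rfl
  have hMN : endRank k Q (M × N) =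
      Module.finrank k ((M × N) →ₗ[PathAlg k Q] (M × N)) := rfl
  have etot : endRank k Q (M × N) =
      Module.finrank k (M →ₗ[PathAlg k Q] M) + Module.finrank k (M →ₗ[PathAlg k Q] N) +
      (Module.finrank k (N →ₗ[PathAlg k Q] M) + Module.finrank k (N →ₗ[PathAlg k Q] N)) := by
    rw [hMN, LinearEquiv.finrank_eq (prodHomEquiv :
        ((M × N) →ₗ[PathAlg k Q] (M × N)) ≃ₗ[k] _),
      Module.finrank_prod, Module.finrank_prod, Module.finrank_prod]
  constructor
  · rw [ha, etot]
    omega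
  constructor
  · intro heq
    rw [ha, etot] at heq
    have hr3 : Module.finrank k (LinearMap.range Φ₃) =
        Module.finrank k (N →ₗ[PathAlg k Q] N) := by omega
    have hsurj : LinearMap.range Φ₃ = ⊤ := Submodule.eq_top_of_finrank_eq hr3
    obtain ⟨g, hg⟩ := (LinearMap.range_eq_top.1 hsurj) LinearMap.id
    exact ⟨g, hg⟩
  · rintro ⟨s, hs⟩
    have hps : ∀ y : N, p (s y) = y := fun y => DFunLike.congr_fun hs y
    have hmem : ∀ x : L, x - s (p x) ∈ LinearMap.range ι := fun x => by
      rw [hexact, LinearMap.mem_ker, map_sub, hps, sub_self]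
    have hinv : ∀ y : LinearMap.range ι, ι ((LinearEquiv.ofInjective ι hι).symm y) = y := by
      intro y
      conv_rhs => rw [← LinearEquiv.apply_symm_apply (LinearEquiv.ofInjective ι hι) y]
      rw [LinearEquiv.ofInjective_apply]
    let r : L →ₗ[PathAlg k Q] M := (LinearEquiv.ofInjective ι hι).symm.toLinearMap ∘ₗ
      (LinearMap.id - s ∘ₗ p).codRestrict (LinearMap.range ι) (fun x => hmem x)
    have hr : ∀ x : L, ι (r x) = x - s (p x) := fun x => by
      have hrx : r x = (LinearEquiv.ofInjective ι hι).symm ⟨x - s (p x), hmem x⟩ := rfl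
      rw [hrx, hinv]
    have h1 : (r.prod p) ∘ₗ (ι.coprod s) = LinearMap.id := by
      apply LinearMap.ext
      rintro ⟨m, nn⟩
      have hp1 : p (ι m + s nn) = nn := by rw [map_add, hpι, hps, zero_add]
      have hr1 : r (ι m + s nn) = m := by
        apply hι
        rw [hr, hp1]
        simp
      show (r (ι m + s nn), p (ι m + s nn)) = (m, nn)
      rw [hp1, hr1]
    have h2 : (ι.coprod s) ∘ₗ (r.prod p) = LinearMap.id := by
      apply LinearMap.ext
      intro x
      show ι (r x) + s (p x) = x
      rw [hr, sub_add_cancel]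
    let E : L ≃ₗ[PathAlg k Q] (M × N) := LinearEquiv.ofLinear (r.prod p) (ι.coprod s) h1 h2
    have conj : (L →ₗ[PathAlg k Q] L) ≃ₗ[k] ((M × N) →ₗ[PathAlg k Q] (M × N)) := {
      toFun := fun f => E.toLinearMap ∘ₗ f ∘ₗ E.symm.toLinearMap
      invFun := fun g => E.symm.toLinearMap ∘ₗ g ∘ₗ E.toLinearMap
      map_add' := fun f g => LinearMap.ext fun x => by simp
      map_smul' := fun c f => LinearMap.ext fun x => by
        show E ((algebraMap k (PathAlg k Q) c) • f (E.symm x))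
          = (algebraMap k (PathAlg k Q) c) • E (f (E.symm x))
        exact E.map_smul _ _
      left_inv := fun f => LinearMap.ext fun x => by simp
      right_inv := fun g => LinearMap.ext fun x => by simp }
    rw [ha, hMN]
    exact LinearEquiv.finrank_eq conj
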